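/- arXiv:1108.2538 — 4 statements merged into one kernel-verified Lean document; each statement's English description precedes it below -/
import Mathlib

section
/- Consider a linear cascade (path network) of N single-pole stages with distinct interpretations of rates: let d : Fin N → ℝ with d_i > 0 for all i, and gains f : Fin (N-1) → ℝ. Let A(d) be the N×N real matrix with diagonal entries A_{ii} = −d_i, subdiagonal entries A_{i+1,i} = f_i, and zeros elsewhere; let B = e₁ (first standard basis column vector) and C = e_Nᵀ (last standard basis row vector). Then the steady-state output variance under white-noise input, V(d) = ∫₀^∞ (C e^{A(d)s} B)² ds, is invariant under any permutation of the rates: for every permutation π of Fin N, ∫₀^∞ (C e^{A(d)s} B)² ds = ∫₀^∞ (C e^{A(d∘π)s} B)² ds. -/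
open MeasureTheory Matrix

/-- The `N × N` dynamics matrix of a linear cascade: diagonal entries `-d i`,
subdiagonal entries `A (i+1) i = f i`, zeros elsewhere. -/
noncomputable def cascadeMatrix (N : ℕ) (d : Fin N → ℝ) (f : Fin (N - 1) → ℝ) :
    Matrix (Fin N) (Fin N) ℝ := fun i j =>
  if i = j then -d i
  else if h : (i : ℕ) = (j : ℕ) + 1 then
    f ⟨j, by have hi := i.isLt; have hj := j.isLt; omega⟩
  else 0

/-- The steady-state output variance of a linear cascade under unit white-noise input:
`V(d) = ∫₀^∞ (C e^{A s} B)² ds` where `B = e₁` and `C = e_Nᵀ`, so that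
`C e^{A s} B` is the `(N-1, 0)` entry of the matrix exponential. -/
noncomputable def cascadeVariance (N : ℕ) (hN : 0 < N) (d : Fin N → ℝ)
    (f : Fin (N - 1) → ℝ) : ℝ :=
  ∫ s in Set.Ioi (0 : ℝ),
    ((NormedSpace.exp (s • cascadeMatrix N d f)) ⟨N - 1, by omega⟩ ⟨0, hN⟩) ^ 2

namespace CascadeAux

open PowerSeries

noncomputable def geom (a : ℝ) : PowerSeries ℝ := PowerSeries.mk fun n => (-a) ^ n

lemma geom_rel (a : ℝ) : (1 + PowerSeries.C a * PowerSeries.X) * geom a = 1 := by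
  ext n
  cases n with
  | zero =>
    simp [geom, PowerSeries.coeff_zero_eq_constantCoeff]
  | succ n =>
    rw [add_mul, one_mul, mul_assoc, map_add, PowerSeries.coeff_C_mul,
      PowerSeries.coeff_succ_X_mul]
    simp [geom, PowerSeries.coeff_mk, pow_succ]
    ring

lemma geom_coeff_rel (a : ℝ) (Q : PowerSeries ℝ) (n : ℕ) :
    PowerSeries.coeff (n + 1) (geom a * Q) + a * PowerSeries.coeff n (geom a * Q)
      = PowerSeries.coeff (n + 1) Q := by
  have h : Q = geom a * Q + PowerSeries.C a * (PowerSeries.X * (geom a * Q)) := by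
    conv_lhs => rw [← one_mul Q, ← geom_rel a]
    ring
  conv_rhs => rw [h]
  rw [map_add, PowerSeries.coeff_C_mul, PowerSeries.coeff_succ_X_mul]

lemma geom_constantCoeff (a : ℝ) : PowerSeries.constantCoeff (geom a) = 1 := by
  simp [geom, ← PowerSeries.coeff_zero_eq_constantCoeff]

variable {N : ℕ}

noncomputable def P (d : Fin N → ℝ) (j : ℕ) : PowerSeries ℝ :=
  ∏ i ∈ Finset.univ.filter (fun i : Fin N => (i : ℕ) ≤ j), geom (d i)

lemma P_constantCoeff (d : Fin N → ℝ) (j : ℕ) :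
    PowerSeries.constantCoeff (P d j) = 1 := by
  rw [P, map_prod]
  exact Finset.prod_eq_one fun i _ => geom_constantCoeff (d i)

lemma P_zero (hN : 0 < N) (d : Fin N → ℝ) : P d 0 = geom (d ⟨0, hN⟩) := by
  rw [P]
  have : Finset.univ.filter (fun i : Fin N => (i : ℕ) ≤ 0) = {⟨0, hN⟩} := by
    ext i
    simp [Fin.ext_iff, Nat.le_zero]
  rw [this, Finset.prod_singleton]

lemma P_succ (d : Fin N → ℝ) (j : ℕ) (hj : j + 1 < N) :
    P d (j + 1) = geom (d ⟨j + 1, hj⟩) * P d j := by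
  rw [P, P]
  have hins : Finset.univ.filter (fun i : Fin N => (i : ℕ) ≤ j + 1)
      = insert ⟨j + 1, hj⟩ (Finset.univ.filter (fun i : Fin N => (i : ℕ) ≤ j)) := by
    ext i
    simp only [Finset.mem_filter, Finset.mem_univ, true_and, Finset.mem_insert, Fin.ext_iff]
    omega
  rw [hins, Finset.prod_insert]
  simp

lemma P_last (hN : 0 < N) (d : Fin N → ℝ) :
    P d (N - 1) = ∏ i : Fin N, geom (d i) := by
  rw [P]
  congr 1
  ext i
  simp only [Finset.mem_filter, Finset.mem_univ, true_and, iff_true]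
  omega

/-- Extended gain sequence. -/
noncomputable def fext (N : ℕ) (f : Fin (N - 1) → ℝ) (k : ℕ) : ℝ :=
  if h : k < N - 1 then f ⟨k, h⟩ else 0

noncomputable def F (N : ℕ) (f : Fin (N - 1) → ℝ) (j : ℕ) : ℝ :=
  ∏ k ∈ Finset.range j, fext N f k

/-- `c d n j` = claimed value of `(A^n) j 0`, divided by the gain product. -/
noncomputable def c (d : Fin N → ℝ) (n j : ℕ) : ℝ :=
  if j ≤ n then PowerSeries.coeff (n - j) (P d j) else 0

lemma c_zero_pos (d : Fin N → ℝ) (j : ℕ) (hj : 0 < j) : c d 0 j = 0 := by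
  simp [c, Nat.not_le.mpr hj]

lemma c_rec_zero (hN : 0 < N) (d : Fin N → ℝ) (n : ℕ) :
    c d (n + 1) 0 = -d ⟨0, hN⟩ * c d n 0 := by
  simp only [c, Nat.zero_le, if_true, Nat.sub_zero, P_zero hN, geom, PowerSeries.coeff_mk]
  rw [pow_succ]
  ring

lemma c_rec (d : Fin N → ℝ) (n j : ℕ) (hj0 : 0 < j) (hjN : j < N) :
    c d (n + 1) j = -d ⟨j, hjN⟩ * c d n j + c d n (j - 1) := by
  obtain ⟨j, rfl⟩ : ∃ j', j = j' + 1 := ⟨j - 1, by omega⟩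
  simp only [Nat.add_sub_cancel]
  rcases lt_trichotomy (j + 1) (n + 1) with h | h | h
  · -- j + 1 ≤ n
    have hjn : j + 1 ≤ n := by omega
    simp only [c, if_pos hjn, if_pos (by omega : j + 1 ≤ n + 1), if_pos (by omega : j ≤ n)]
    rw [P_succ d j hjN]
    have key := geom_coeff_rel (d ⟨j + 1, hjN⟩) (P d j) (n - (j + 1))
    have e1 : n + 1 - (j + 1) = n - (j + 1) + 1 := by omega
    have e2 : n - j = n - (j + 1) + 1 := by omega
    rw [e1, e2]
    linarith [key]
  · -- j + 1 = n + 1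
    have hj : j = n := by omega
    subst hj
    simp only [c, le_refl, if_pos, if_neg (by omega : ¬ j + 1 ≤ j), Nat.sub_self,
      if_pos (le_refl j)]
    rw [PowerSeries.coeff_zero_eq_constantCoeff, P_constantCoeff d (j+1), P_constantCoeff d j]
    ring
  · -- j + 1 > n + 1
    simp only [c, if_neg (by omega : ¬ j + 1 ≤ n + 1), if_neg (by omega : ¬ j + 1 ≤ n),
      if_neg (by omega : ¬ j ≤ n)]
    ring

end CascadeAux

namespace CascadeAux

variable {N : ℕ}

lemma mul_entry (d : Fin N → ℝ) (f : Fin (N - 1) → ℝ) (M : Matrix (Fin N) (Fin N) ℝ)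
    (j : ℕ) (hj : j < N) (k0 : Fin N) :
    (cascadeMatrix N d f * M) ⟨j, hj⟩ k0
      = -d ⟨j, hj⟩ * M ⟨j, hj⟩ k0
        + (if h : 0 < j then fext N f (j - 1) * M ⟨j - 1, by omega⟩ k0 else 0) := by
  rw [Matrix.mul_apply]
  by_cases h : 0 < j
  · rw [dif_pos h]
    set jf : Fin N := ⟨j, hj⟩
    set jf' : Fin N := ⟨j - 1, by omega⟩
    have hne : jf ≠ jf' := by
      simp only [jf, jf', ne_eq, Fin.ext_iff]
      omega
    have hsub : ({jf, jf'} : Finset (Fin N)) ⊆ Finset.univ := Finset.subset_univ _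
    rw [← Finset.sum_subset hsub]
    · rw [Finset.sum_pair hne]
      have h1 : cascadeMatrix N d f jf jf = -d jf := by
        simp [cascadeMatrix]
      have h2 : cascadeMatrix N d f jf jf' = fext N f (j - 1) := by
        simp only [cascadeMatrix, if_neg hne]
        rw [dif_pos (by simp only [jf, jf']; omega : ((jf : ℕ) = (jf' : ℕ) + 1))]
        rw [fext, dif_pos (by omega : j - 1 < N - 1)]
      rw [h1, h2]
    · intro l _ hl
      simp only [Finset.mem_insert, Finset.mem_singleton, not_or] at hl
      have hA : cascadeMatrix N d f jf l = 0 := by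
        simp only [cascadeMatrix]
        rw [if_neg (fun hh => hl.1 hh.symm), dif_neg ?_]
        intro hc
        apply hl.2
        apply Fin.ext
        have hc' : j = (l : ℕ) + 1 := hc
        show (l : ℕ) = j - 1
        omega
      rw [hA, zero_mul]
  · rw [dif_neg h]
    have hj0 : j = 0 := by omega
    subst hj0
    rw [Finset.sum_eq_single ⟨0, hj⟩]
    · simp [cascadeMatrix]
    · intro l _ hl
      have hA : cascadeMatrix N d f ⟨0, hj⟩ l = 0 := by
        simp only [cascadeMatrix]
        rw [if_neg (fun hh => hl hh.symm), dif_neg (by omega)]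
      rw [hA, zero_mul]
    · intro hmem
      exact absurd (Finset.mem_univ _) hmem

lemma pow_entry (hN : 0 < N) (d : Fin N → ℝ) (f : Fin (N - 1) → ℝ) (n : ℕ) (j : ℕ)
    (hj : j < N) :
    (cascadeMatrix N d f ^ n) ⟨j, hj⟩ ⟨0, hN⟩ = F N f j * c d n j := by
  induction n generalizing j hj with
  | zero =>
    rw [pow_zero]
    by_cases h : j = 0
    · subst h
      rw [Matrix.one_apply_eq]
      simp [F, c, P_zero hN, geom]
    · rw [Matrix.one_apply_ne (by simp [Fin.ext_iff, h])]
      rw [c_zero_pos d j (by omega), mul_zero]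
  | succ n ih =>
    rw [pow_succ', mul_entry d f _ j hj]
    by_cases h : 0 < j
    · obtain ⟨m, rfl⟩ : ∃ m, j = m + 1 := ⟨j - 1, by omega⟩
      rw [dif_pos h, ih (m + 1) hj, ih (m + 1 - 1) (by omega)]
      have hF : F N f (m + 1) = fext N f m * F N f m := by
        rw [F, F, Finset.prod_range_succ]
        ring
      rw [c_rec d n (m + 1) h hj, hF]
      simp only [Nat.add_sub_cancel]
      ring
    · have hj0 : j = 0 := by omega
      subst hj0
      rw [dif_neg h, ih 0 hj, c_rec_zero hN d n]
      have : (⟨0, hj⟩ : Fin N) = ⟨0, hN⟩ := rfl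
      rw [this]
      ring

lemma pow_entry_last (hN : 0 < N) (d : Fin N → ℝ) (f : Fin (N - 1) → ℝ) (n : ℕ) :
    (cascadeMatrix N d f ^ n) ⟨N - 1, by omega⟩ ⟨0, hN⟩
      = F N f (N - 1) * (if N - 1 ≤ n then
          PowerSeries.coeff (n - (N - 1)) (∏ i : Fin N, geom (d i)) else 0) := by
  rw [pow_entry hN d f n (N - 1) (by omega), c, P_last hN d]

lemma pow_entry_perm (hN : 0 < N) (d : Fin N → ℝ) (f : Fin (N - 1) → ℝ)
    (π : Equiv.Perm (Fin N)) (n : ℕ) :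
    (cascadeMatrix N (d ∘ π) f ^ n) ⟨N - 1, by omega⟩ ⟨0, hN⟩
      = (cascadeMatrix N d f ^ n) ⟨N - 1, by omega⟩ ⟨0, hN⟩ := by
  rw [pow_entry_last hN d f n, pow_entry_last hN (d ∘ π) f n]
  have : (∏ i : Fin N, geom ((d ∘ π) i)) = ∏ i : Fin N, geom (d i) :=
    Equiv.prod_comp π (fun i => geom (d i))
  rw [this]

end CascadeAux

namespace CascadeAux

variable {N : ℕ}

lemma entry_bound (A : Matrix (Fin N) (Fin N) ℝ) :
    ∃ B : ℝ, 0 ≤ B ∧ ∀ (n : ℕ) (i j : Fin N), |(A ^ n) i j| ≤ B ^ n := by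
  refine ⟨(∑ k : Fin N, ∑ l : Fin N, |A k l|) + 1, by positivity, ?_⟩
  set B := (∑ k : Fin N, ∑ l : Fin N, |A k l|) + 1 with hB
  have hrow : ∀ i j : Fin N, |A i j| ≤ B := by
    intro i j
    have h1 : |A i j| ≤ ∑ l : Fin N, |A i l| :=
      Finset.single_le_sum (f := fun l => |A i l|) (fun l _ => abs_nonneg _) (Finset.mem_univ j)
    have h2 : ∑ l : Fin N, |A i l| ≤ ∑ k : Fin N, ∑ l : Fin N, |A k l| :=
      Finset.single_le_sum (f := fun k => ∑ l : Fin N, |A k l|)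
        (fun k _ => Finset.sum_nonneg fun l _ => abs_nonneg _) (Finset.mem_univ i)
    linarith
  have hcolsum : ∀ j : Fin N, (∑ k : Fin N, |A k j|) ≤ B := by
    intro j
    have h2 : ∑ k : Fin N, |A k j| ≤ ∑ k : Fin N, ∑ l : Fin N, |A k l| := by
      apply Finset.sum_le_sum
      intro k _
      exact Finset.single_le_sum (f := fun l => |A k l|) (fun l _ => abs_nonneg _)
        (Finset.mem_univ j)
    linarith
  intro n
  induction n with
  | zero =>
    intro i j
    rw [pow_zero]
    by_cases h : i = j
    · subst h; rw [Matrix.one_apply_eq]; simp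
    · rw [Matrix.one_apply_ne h]; simp
  | succ n ih =>
    intro i j
    rw [pow_succ, Matrix.mul_apply]
    calc |∑ k : Fin N, (A ^ n) i k * A k j| ≤ ∑ k : Fin N, |(A ^ n) i k * A k j| :=
          Finset.abs_sum_le_sum_abs _ _
      _ ≤ ∑ k : Fin N, B ^ n * |A k j| := by
          apply Finset.sum_le_sum
          intro k _
          rw [abs_mul]
          exact mul_le_mul_of_nonneg_right (ih i k) (abs_nonneg _)
      _ = B ^ n * ∑ k : Fin N, |A k j| := by rw [Finset.mul_sum]
      _ ≤ B ^ n * B := by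
          apply mul_le_mul_of_nonneg_left (hcolsum j)
          positivity
      _ = B ^ (n + 1) := by rw [pow_succ]

lemma summable_entry (A : Matrix (Fin N) (Fin N) ℝ) (i j : Fin N) :
    Summable fun n : ℕ => ((n.factorial : ℝ)⁻¹ • A ^ n) i j := by
  obtain ⟨B, hB0, hB⟩ := entry_bound A
  refine Summable.of_norm_bounded (Real.summable_pow_div_factorial B) fun n => ?_
  rw [Matrix.smul_apply, smul_eq_mul, Real.norm_eq_abs, abs_mul, abs_inv, Nat.abs_cast,
    div_eq_inv_mul]
  apply mul_le_mul_of_nonneg_left (hB n i j)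
  positivity

lemma exp_entry (A : Matrix (Fin N) (Fin N) ℝ) (i j : Fin N) :
    NormedSpace.exp A i j = ∑' n : ℕ, (n.factorial : ℝ)⁻¹ * (A ^ n) i j := by
  rw [NormedSpace.exp_eq_tsum ℝ]
  have hsum : Summable fun n : ℕ => (n.factorial : ℝ)⁻¹ • A ^ n := by
    refine Pi.summable.mpr ?_
    intro i'
    rw [Pi.summable]
    intro j'
    exact summable_entry A i' j'
  have hsum2 : Summable fun n : ℕ => ((n.factorial : ℝ)⁻¹ • A ^ n) i := by
    rw [Pi.summable]
    intro j'
    exact summable_entry A i j'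
  show (∑' n : ℕ, (n.factorial : ℝ)⁻¹ • A ^ n) i j = _
  erw [tsum_apply hsum, tsum_apply hsum2]
  apply tsum_congr
  intro n
  rw [Matrix.smul_apply, smul_eq_mul]

end CascadeAux


/-- The noise response (steady-state output variance) of a linear pathway is independent of
the relative position of its nodes: permuting the rates `d` does not change the variance. -/
theorem cascade_variance_perm_invariant (N : ℕ) (hN : 0 < N) (d : Fin N → ℝ)
    (hd : ∀ i, 0 < d i) (f : Fin (N - 1) → ℝ) (π : Equiv.Perm (Fin N)) :
    cascadeVariance N hN d f = cascadeVariance N hN (d ∘ π) f := by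
  have key : ∀ s : ℝ,
      (NormedSpace.exp (s • cascadeMatrix N d f)) ⟨N - 1, by omega⟩ ⟨0, hN⟩
        = (NormedSpace.exp (s • cascadeMatrix N (d ∘ π) f)) ⟨N - 1, by omega⟩ ⟨0, hN⟩ := by
    intro s
    rw [CascadeAux.exp_entry, CascadeAux.exp_entry]
    apply tsum_congr
    intro n
    rw [smul_pow, smul_pow, Matrix.smul_apply, Matrix.smul_apply, smul_eq_mul, smul_eq_mul,
      CascadeAux.pow_entry_perm hN d f π n]
  unfold cascadeVariance
  congr 1
  funext s
  rw [key s]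
end

section
/- Let N ≥ 2, let d₁, …, d_N be positive pairwise distinct reals, and fix two distinct indices x ≠ y. For indices k, m define T_{k,m} = 1 / ( (d_k + d_m) ∏_{a ≠ k} (d_k − d_a) ∏_{b ≠ m} (d_m − d_b) ), and set P_x = ∏_{s ≠ x, y} (d_x − d_s) and P_y = ∏_{s ≠ x, y} (d_y − d_s). Then T_{x,x} + T_{x,y} + T_{y,x} + T_{y,y} = ( (d_x P_x − d_y P_y)² + d_x d_y (P_x − P_y)² ) / ( 2 d_x d_y (d_x + d_y) (d_x − d_y)² P_x² P_y² ). In particular the numerator of this rational expression in (d_x − d_y) vanishes to second order at d_x = d_y, so the sum is bounded as d_y → d_x. -/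
open Finset

/-- The sum `T_{x,x} + T_{x,y} + T_{y,x} + T_{y,y}` of the partial-fraction terms
`T_{k,m} = 1/((d_k + d_m) ∏_{a≠k}(d_k − d_a) ∏_{b≠m}(d_m − d_b))` equals
`((d_x P_x − d_y P_y)² + d_x d_y (P_x − P_y)²) / (2 d_x d_y (d_x + d_y) (d_x − d_y)² P_x² P_y²)`,
where `P_x = ∏_{s≠x,y}(d_x − d_s)` and `P_y = ∏_{s≠x,y}(d_y − d_s)`; in particular the
numerator vanishes to second order at `d_x = d_y`. -/
theorem partial_fraction_sum_identity (N : ℕ) (hN : 2 ≤ N) (d : Fin N → ℝ)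
    (hd : ∀ i, 0 < d i) (hdist : Function.Injective d) (x y : Fin N) (hxy : x ≠ y)
    (T : Fin N → Fin N → ℝ)
    (hT : ∀ k m, T k m = 1 / ((d k + d m) * (∏ a ∈ univ.erase k, (d k - d a)) *
      (∏ b ∈ univ.erase m, (d m - d b))))
    (Px Py : ℝ)
    (hPx : Px = ∏ s ∈ (univ.erase x).erase y, (d x - d s))
    (hPy : Py = ∏ s ∈ (univ.erase x).erase y, (d y - d s)) :
    T x x + T x y + T y x + T y y =
      ((d x * Px - d y * Py) ^ 2 + d x * d y * (Px - Py) ^ 2) /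
        (2 * d x * d y * (d x + d y) * (d x - d y) ^ 2 * Px ^ 2 * Py ^ 2) := by
  have hdxy : d x ≠ d y := fun h => hxy (hdist h)
  have hx0 : d x ≠ 0 := (hd x).ne'
  have hy0 : d y ≠ 0 := (hd y).ne'
  have hsum : d x + d y ≠ 0 := (add_pos (hd x) (hd y)).ne'
  have hsx : d x + d x ≠ 0 := (add_pos (hd x) (hd x)).ne'
  have hsy : d y + d y ≠ 0 := (add_pos (hd y) (hd y)).ne'
  have hPx0 : Px ≠ 0 := by
    rw [hPx]
    refine Finset.prod_ne_zero_iff.mpr fun s hs => sub_ne_zero.mpr fun h => ?_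
    have := Finset.ne_of_mem_erase (Finset.mem_of_mem_erase hs)
    exact this (hdist h).symm
  have hPy0 : Py ≠ 0 := by
    rw [hPy]
    refine Finset.prod_ne_zero_iff.mpr fun s hs => sub_ne_zero.mpr fun h => ?_
    exact Finset.ne_of_mem_erase hs (hdist h).symm
  have hyx : y ∈ univ.erase x := Finset.mem_erase.mpr ⟨Ne.symm hxy, Finset.mem_univ y⟩
  have hxey : x ∈ univ.erase y := Finset.mem_erase.mpr ⟨hxy, Finset.mem_univ x⟩
  have hcomm : (univ.erase y).erase x = (univ.erase x).erase y := by rw [Finset.erase_right_comm]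
  have hprodx : (∏ a ∈ univ.erase x, (d x - d a)) = (d x - d y) * Px := by
    rw [hPx, ← Finset.mul_prod_erase _ _ hyx]
  have hprody : (∏ b ∈ univ.erase y, (d y - d b)) = (d y - d x) * Py := by
    rw [hPy, ← hcomm, ← Finset.mul_prod_erase _ _ hxey]
  have h1 : d x - d y ≠ 0 := sub_ne_zero.mpr hdxy
  have h2 : d y - d x ≠ 0 := sub_ne_zero.mpr (Ne.symm hdxy)
  have e1 : T x x = 1 / (2 * d x * (d x - d y) ^ 2 * Px ^ 2) := by
    rw [hT, hprodx]; congr 1; ring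
  have e4 : T y y = 1 / (2 * d y * (d x - d y) ^ 2 * Py ^ 2) := by
    rw [hT, hprody]; congr 1; ring
  have e2 : T x y = -(1 / ((d x + d y) * (d x - d y) ^ 2 * (Px * Py))) := by
    rw [hT, hprodx, hprody, ← one_div_neg_eq_neg_one_div]; congr 1; ring
  have e3 : T y x = -(1 / ((d x + d y) * (d x - d y) ^ 2 * (Px * Py))) := by
    rw [hT, hprodx, hprody, ← one_div_neg_eq_neg_one_div]; congr 1; ring
  rw [e1, e2, e3, e4]
  field_simp
  ring
end

section
/- Let W be a standard Brownian motion, let n ≥ 1, let 0 = t₀ ≤ t₁ ≤ t₂ ≤ … ≤ t_n be reals, and let σ₁, …, σ_n be positive reals. Then E[ ∏_{k=1}^{n} e^{σ_k W_{t_k}} ] = exp( (1/2) Σ_{k=1}^{n} ( Σ_{m=k}^{n} σ_m )² (t_k − t_{k−1}) ). -/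
open MeasureTheory ProbabilityTheory Filter Real

/-- `W` is a standard Brownian motion on the probability space `Ω`: each `W t` is
measurable, `W 0 = 0` almost surely, `W` has independent increments, the increment
`W t − W s` (for `0 ≤ s ≤ t`) is Gaussian with mean `0` and variance `t − s`, and the
sample paths are almost surely continuous. -/
def IsStdBrownianMotion {Ω : Type*} [MeasureSpace Ω] (W : ℝ → Ω → ℝ) : Prop :=
  (∀ t, Measurable (W t)) ∧
  (∀ᵐ ω, W 0 ω = 0) ∧
  (∀ (n : ℕ) (t : Fin (n + 1) → ℝ), Monotone t →
      iIndepFun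
        (fun i : Fin n => fun ω => W (t i.succ) ω - W (t i.castSucc) ω) ℙ) ∧
  (∀ s t : ℝ, 0 ≤ s → s ≤ t →
      Measure.map (fun ω => W t ω - W s ω) ℙ = gaussianReal 0 (Real.toNNReal (t - s))) ∧
  (∀ᵐ ω, Continuous fun t => W t ω)

open scoped NNReal ENNReal in
/-- The moment generating function of a centered Gaussian measure:
`∫ x, exp (c * x) ∂(gaussianReal 0 v) = exp (c² v / 2)`. -/
lemma gauss_exp_integral (c : ℝ) (v : ℝ≥0) :
    ∫ x, Real.exp (c * x) ∂(gaussianReal 0 v) = Real.exp (c ^ 2 * v / 2) := by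
  rcases eq_or_ne v 0 with rfl | hv
  · simp [gaussianReal_zero_var]
  · rw [gaussianReal_of_var_ne_zero _ hv]
    have hpdf : (gaussianPDF 0 v) = fun x => ((Real.toNNReal (gaussianPDFReal 0 v x) : ℝ≥0) : ℝ≥0∞) := by
      ext x; rfl
    rw [hpdf, integral_withDensity_eq_integral_smul
      ((measurable_gaussianPDFReal 0 v).real_toNNReal) (fun x => Real.exp (c * x))]
    have hv0 : (0 : ℝ) < v := lt_of_le_of_ne (v.coe_nonneg) (by exact_mod_cast (Ne.symm hv))
    have key : (fun x => (Real.toNNReal (gaussianPDFReal 0 v x)) • Real.exp (c * x))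
        = fun x => Real.exp (c ^ 2 * v / 2) * gaussianPDFReal (c * v) v x := by
      funext x
      simp only [NNReal.smul_def, smul_eq_mul, Real.coe_toNNReal _ (gaussianPDFReal_nonneg _ _ _)]
      unfold gaussianPDFReal
      have h1 : rexp (-(x - 0) ^ 2 / (2 * (v:ℝ))) * rexp (c * x)
          = rexp (c ^ 2 * v / 2) * rexp (-(x - c * v) ^ 2 / (2 * (v:ℝ))) := by
        rw [← Real.exp_add, ← Real.exp_add]
        congr 1
        field_simp
        ring
      calc (√(2 * π * v))⁻¹ * rexp (-(x - 0) ^ 2 / (2 * (v:ℝ))) * rexp (c * x)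
          = (√(2 * π * v))⁻¹ * (rexp (-(x - 0) ^ 2 / (2 * (v:ℝ))) * rexp (c * x)) := by ring
        _ = (√(2 * π * v))⁻¹ * (rexp (c ^ 2 * v / 2) * rexp (-(x - c * v) ^ 2 / (2 * (v:ℝ)))) := by
            rw [h1]
        _ = rexp (c ^ 2 * v / 2) * ((√(2 * π * v))⁻¹ * rexp (-(x - c * v) ^ 2 / (2 * (v:ℝ)))) := by
            ring
    rw [key, integral_const_mul, integral_gaussianPDFReal_eq_one (c * v) hv, mul_one]

/-- Expectation of a product of exponentials of Brownian motion at ordered times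
`0 = t₀ ≤ t₁ ≤ … ≤ t_n` with positive weights `σ₁, …, σ_n`:
`E[∏_{k=1}^n e^{σ_k W_{t_k}}] = exp((1/2) Σ_{k=1}^n (Σ_{m=k}^n σ_m)² (t_k − t_{k−1}))`. -/
theorem integral_prod_exp_brownian
    {Ω : Type*} [MeasureSpace Ω] [IsProbabilityMeasure (ℙ : Measure Ω)]
    (W : ℝ → Ω → ℝ) (hW : IsStdBrownianMotion W)
    (n : ℕ) (hn : 1 ≤ n) (t : Fin (n + 1) → ℝ) (ht0 : t 0 = 0) (hmono : Monotone t)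
    (σ : Fin n → ℝ) (hσ : ∀ k, 0 < σ k) :
    (∫ ω, ∏ k : Fin n, Real.exp (σ k * W (t k.succ) ω)) =
      Real.exp ((1 / 2) * ∑ k : Fin n,
        (∑ m ∈ Finset.Ici k, σ m) ^ 2 * (t k.succ - t k.castSucc)) := by
  obtain ⟨hmeas, hW0, hindep, hgauss, -⟩ := hW
  set c : Fin n → ℝ := fun k => ∑ m ∈ Finset.Ici k, σ m with hc
  set X : Fin n → Ω → ℝ := fun i ω => W (t i.succ) ω - W (t i.castSucc) ω with hX
  set Y : Fin n → Ω → ℝ := fun i ω => c i * X i ω with hYdef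
  have hXmeas : ∀ i, Measurable (X i) := fun i => (hmeas _).sub (hmeas _)
  have hYmeas : ∀ i, Measurable (Y i) := fun i => (hXmeas i).const_mul _
  have hYindep : iIndepFun Y ℙ :=
    (hindep n t hmono).comp (fun i x => c i * x) (fun i => measurable_const_mul _)
  have hae : ∀ᵐ ω, (∏ k : Fin n, Real.exp (σ k * W (t k.succ) ω))
      = Real.exp ((∑ i : Fin n, Y i) ω) := by
    filter_upwards [hW0] with ω hω
    rw [← Real.exp_sum]
    congr 1
    have ht00 : W (t 0) ω = 0 := by rw [ht0]; exact hω
    have tele : ∀ (j : ℕ) (hj : j < n),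
        ∑ i ∈ Finset.Iic (⟨j, hj⟩ : Fin n), X i ω = W (t (Fin.succ ⟨j, hj⟩)) ω := by
      intro j
      induction j with
      | zero =>
        intro hj
        have h1 : Finset.Iic (⟨0, hj⟩ : Fin n) = {⟨0, hj⟩} := by
          ext i
          simp only [Finset.mem_Iic, Finset.mem_singleton, Fin.le_def, Fin.ext_iff]
          omega
        have h2 : t (Fin.castSucc (⟨0, hj⟩ : Fin n)) = t 0 := by
          congr 1
        rw [h1, Finset.sum_singleton]
        simp only [hX, h2, ht00, sub_zero]
      | succ j ih =>
        intro hj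
        have hj' : j < n := Nat.lt_of_succ_lt hj
        have h1 : Finset.Iic (⟨j + 1, hj⟩ : Fin n)
            = insert (⟨j + 1, hj⟩ : Fin n) (Finset.Iic (⟨j, hj'⟩ : Fin n)) := by
          ext i; simp [Fin.le_def, Fin.ext_iff]; omega
        have h2 : (⟨j + 1, hj⟩ : Fin n) ∉ Finset.Iic (⟨j, hj'⟩ : Fin n) := by
          simp [Fin.le_def]
        have h3 : t (Fin.castSucc (⟨j + 1, hj⟩ : Fin n)) = t (Fin.succ (⟨j, hj'⟩ : Fin n)) := by
          congr 1
        rw [h1, Finset.sum_insert h2, ih hj']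
        simp only [hX, h3]
        ring
    have tele' : ∀ m : Fin n, ∑ i ∈ Finset.Iic m, X i ω = W (t m.succ) ω := by
      intro m; exact tele m.1 m.2
    calc ∑ k : Fin n, σ k * W (t k.succ) ω
        = ∑ k : Fin n, ∑ i ∈ Finset.Iic k, σ k * X i ω := by
          refine Finset.sum_congr rfl fun k _ => ?_
          rw [← Finset.mul_sum, tele' k]
      _ = ∑ i : Fin n, ∑ k ∈ Finset.Ici i, σ k * X i ω := by
          refine Finset.sum_comm' ?_
          intro k i
          simp [Finset.mem_Iic, Finset.mem_Ici]
      _ = (∑ i : Fin n, Y i) ω := by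
          simp only [Finset.sum_apply, hYdef, hc, Finset.sum_mul]
  rw [integral_congr_ae hae]
  have hmgf : ∫ ω, Real.exp ((∑ i : Fin n, Y i) ω) = mgf (∑ i : Fin n, Y i) ℙ 1 := by
    simp [mgf]
  rw [hmgf, hYindep.mgf_sum hYmeas Finset.univ]
  have hterm : ∀ i : Fin n, mgf (Y i) ℙ 1
      = Real.exp ((c i) ^ 2 * (t i.succ - t i.castSucc) / 2) := by
    intro i
    have h0 : (0 : ℝ) ≤ t i.castSucc := ht0 ▸ hmono (Fin.zero_le _)
    have hle : t i.castSucc ≤ t i.succ := hmono (Fin.castSucc_le_succ i)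
    have hmap := hgauss (t i.castSucc) (t i.succ) h0 hle
    have hmap' : Measure.map (X i) ℙ = gaussianReal 0 (Real.toNNReal (t i.succ - t i.castSucc)) :=
      hmap
    have hcont : Continuous fun x : ℝ => Real.exp (c i * x) :=
      Real.continuous_exp.comp (continuous_const.mul continuous_id)
    have h1 : mgf (Y i) ℙ 1 = ∫ ω, Real.exp (c i * X i ω) := by
      simp [mgf, hYdef]
    have h2 : ∫ ω, Real.exp (c i * X i ω)
        = ∫ x, Real.exp (c i * x) ∂(Measure.map (X i) ℙ) :=
      (integral_map (hXmeas i).aemeasurable hcont.aestronglyMeasurable).symm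
    rw [h1, h2, hmap', gauss_exp_integral, Real.coe_toNNReal _ (sub_nonneg.2 hle)]
  rw [Finset.prod_congr rfl (fun i _ => hterm i), ← Real.exp_sum]
  congr 1
  rw [Finset.mul_sum]
  exact Finset.sum_congr rfl fun k _ => by ring
end

section
/- Let W be a standard Brownian motion, let b, σ > 0 and a > σ²/2, and define Y(t) = b ∫₀^t e^{−(a + σ²/2) u} e^{σ W_u} du. Then the steady-state second moment exists and equals lim_{t→∞} E[Y(t)²] = b² / ( a (a − σ²/2) ). -/
open MeasureTheory ProbabilityTheory Filter Real

open scoped NNReal ENNReal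
open Set

lemma lint_exp_Ioi {β : ℝ} (hβ : 0 < β) (w : ℝ) :
    ∫⁻ x in Set.Ioi w, ENNReal.ofReal (Real.exp (-β * x)) =
      ENNReal.ofReal (Real.exp (-β * w) / β) := by
  rw [← ofReal_integral_eq_lintegral_ofReal (exp_neg_integrableOn_Ioi w hβ)
      (Filter.Eventually.of_forall fun x => (Real.exp_pos _).le)]
  congr 1
  have hderiv : ∀ x ∈ Set.Ioi w, HasDerivAt (fun x => -(Real.exp (-β * x) / β))
      (Real.exp (-β * x)) x := by
    intro x _
    have h1 : HasDerivAt (fun x : ℝ => -β * x) (-β) x := by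
      simpa using (hasDerivAt_id x).const_mul (-β)
    have h2 := (h1.exp.div_const β).neg
    exact h2.congr_deriv (by field_simp)
  have htend : Tendsto (fun x => -(Real.exp (-β * x) / β)) atTop (nhds 0) := by
    have : Tendsto (fun x : ℝ => -β * x) atTop atBot := by
      exact Tendsto.const_mul_atTop_of_neg (neg_neg_iff_pos.mpr hβ) tendsto_id
    simpa using ((Real.tendsto_exp_atBot.comp this).div_const β).neg
  have := integral_Ioi_of_hasDerivAt_of_tendsto
    (Continuous.continuousWithinAt (by continuity)) hderiv (exp_neg_integrableOn_Ioi w hβ) htend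
  rw [this]
  ring

lemma gauss_pdf_mul (c : ℝ) {v : ℝ≥0} (hv : v ≠ 0) (x : ℝ) :
    Real.exp (c * x) * gaussianPDFReal 0 v x =
      Real.exp (c ^ 2 * v / 2) * gaussianPDFReal (c * v) v x := by
  have hv' : (v : ℝ) ≠ 0 := by exact_mod_cast hv
  simp only [gaussianPDFReal]
  rw [mul_left_comm, mul_left_comm (Real.exp (c ^ 2 * v / 2)), ← Real.exp_add, ← Real.exp_add]
  congr 2
  field_simp
  ring

lemma integral_exp_gaussianReal (c : ℝ) (v : ℝ≥0) :
    Integrable (fun x => Real.exp (c * x)) (gaussianReal 0 v) ∧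
      ∫ x, Real.exp (c * x) ∂(gaussianReal 0 v) = Real.exp (c ^ 2 * v / 2) := by
  by_cases hv : v = 0
  · subst hv
    rw [gaussianReal_zero_var]
    constructor
    · refine ⟨(by fun_prop : Measurable fun x => Real.exp (c * x)).aestronglyMeasurable, ?_⟩
      rw [HasFiniteIntegral, lintegral_dirac]
      exact ENNReal.coe_lt_top
    · rw [integral_dirac]
      norm_num
  · have hpdf_eq : (fun x => Real.exp (c * x) * gaussianPDFReal 0 v x) =
        fun x => Real.exp (c ^ 2 * v / 2) * gaussianPDFReal (c * v) v x :=
      funext fun x => gauss_pdf_mul c hv x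
    rw [gaussianReal_of_var_ne_zero _ hv]
    constructor
    · rw [integrable_withDensity_iff (measurable_gaussianPDF _ _)
        (Filter.Eventually.of_forall fun x => ENNReal.ofReal_lt_top)]
      have : (fun x => Real.exp (c * x) * (gaussianPDF 0 v x).toReal) =
          fun x => Real.exp (c ^ 2 * v / 2) * gaussianPDFReal (c * v) v x := by
        funext x
        rw [gaussianPDF, ENNReal.toReal_ofReal (gaussianPDFReal_nonneg _ _ _)]
        exact gauss_pdf_mul c hv x
      rw [this]
      exact (integrable_gaussianPDFReal _ _).const_mul _
    · have h1 : ∫ x, Real.exp (c * x) ∂(volume.withDensity (gaussianPDF 0 v)) =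
          ∫ x, gaussianPDFReal 0 v x * Real.exp (c * x) := by
        have : gaussianPDF 0 v = fun x => ((gaussianPDFReal 0 v x).toNNReal : ℝ≥0∞) := rfl
        rw [this, integral_withDensity_eq_integral_smul
          ((measurable_gaussianPDFReal 0 v).real_toNNReal)]
        congr 1
        funext x
        rw [NNReal.smul_def, smul_eq_mul, Real.coe_toNNReal _ (gaussianPDFReal_nonneg _ _ _)]
      rw [h1]
      simp_rw [mul_comm (gaussianPDFReal 0 v _)]
      rw [hpdf_eq, integral_const_mul, integral_gaussianPDFReal_eq_one _ hv, mul_one]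

lemma sup_lint_Ioc {g : ℝ → ℝ≥0∞} (hg : Measurable g) :
    (⨆ n : ℕ, ∫⁻ x in Set.Ioc (0:ℝ) n, g x) = ∫⁻ x in Set.Ioi (0:ℝ), g x := by
  have hmono : Monotone fun n : ℕ => (Set.Ioc (0:ℝ) n).indicator g := by
    intro m n hmn x
    show (Set.Ioc (0:ℝ) m).indicator g x ≤ (Set.Ioc (0:ℝ) n).indicator g x
    by_cases hx : x ∈ Set.Ioc (0:ℝ) m
    · rw [Set.indicator_of_mem hx,
        Set.indicator_of_mem (Set.Ioc_subset_Ioc_right (by exact_mod_cast hmn) hx)]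
    · simp [Set.indicator_of_notMem hx]
  have key := lintegral_iSup (μ := volume) (f := fun n : ℕ => (Set.Ioc (0:ℝ) n).indicator g)
    (fun n => hg.indicator measurableSet_Ioc) hmono
  simp_rw [lintegral_indicator measurableSet_Ioc] at key
  rw [← key, ← lintegral_indicator measurableSet_Ioi]
  congr 1
  funext x
  by_cases hx : 0 < x
  · rw [Set.indicator_of_mem (Set.mem_Ioi.mpr hx)]
    refine le_antisymm (iSup_le fun n => Set.indicator_le_self _ _ _) ?_
    refine le_trans ?_ (le_iSup _ ⌈x⌉₊)
    rw [Set.indicator_of_mem (show x ∈ Set.Ioc (0:ℝ) (⌈x⌉₊:ℕ) from ⟨hx, Nat.le_ceil x⟩) g]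
  · rw [Set.indicator_of_notMem (by simpa using hx)]
    simp only [ENNReal.iSup_eq_zero]
    intro n
    exact Set.indicator_of_notMem (fun h => hx h.1) _

lemma tendsto_double_lint {q : ℝ → ℝ → ℝ≥0∞} (hq : Measurable (Function.uncurry q)) :
    Tendsto (fun t : ℝ => ∫⁻ u in Set.Ioc 0 t, ∫⁻ v in Set.Ioc 0 t, q u v) atTop
      (nhds (∫⁻ u in Set.Ioi 0, ∫⁻ v in Set.Ioi 0, q u v)) := by
  set J : ℝ → ℝ → ℝ≥0∞ := fun t u => ∫⁻ v in Set.Ioc 0 t, q u v with hJ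
  set K : ℝ → ℝ≥0∞ := fun t => ∫⁻ u in Set.Ioc 0 t, J t u with hK
  set Jinf : ℝ → ℝ≥0∞ := fun u => ∫⁻ v in Set.Ioi 0, q u v with hJinf
  set Kinf : ℝ≥0∞ := ∫⁻ u in Set.Ioi 0, Jinf u with hKinf
  have hqu : ∀ u, Measurable (q u) := fun u =>
    hq.comp (measurable_prodMk_left)
  have hJmeas : ∀ t, Measurable (J t) := fun t => Measurable.lintegral_prod_right hq
  have hJmono : ∀ u, Monotone fun t => J t u := fun u s t hst =>
    lintegral_mono_set (Set.Ioc_subset_Ioc_right hst)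
  have hJle : ∀ t u, J t u ≤ Jinf u := fun t u =>
    lintegral_mono_set Set.Ioc_subset_Ioi_self
  have hKmono : Monotone K := by
    intro s t hst
    exact le_trans (lintegral_mono fun u => hJmono u hst)
      (lintegral_mono_set (Set.Ioc_subset_Ioc_right hst))
  have hKle : ∀ t, K t ≤ Kinf := fun t =>
    le_trans (lintegral_mono fun u => hJle t u) (lintegral_mono_set Set.Ioc_subset_Ioi_self)
  have hsup : (⨆ n : ℕ, K ↑n) = Kinf := by
    have hfm : ∀ n : ℕ, Measurable fun u => (Set.Ioc (0:ℝ) n).indicator (J n) u :=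
      fun n => (hJmeas _).indicator measurableSet_Ioc
    have hfmono : Monotone fun (n : ℕ) (u : ℝ) => (Set.Ioc (0:ℝ) n).indicator (J n) u := by
      intro m n hmn u
      show (Set.Ioc (0:ℝ) m).indicator (J m) u ≤ (Set.Ioc (0:ℝ) n).indicator (J n) u
      by_cases hu : u ∈ Set.Ioc (0:ℝ) m
      · rw [Set.indicator_of_mem hu,
          Set.indicator_of_mem (Set.Ioc_subset_Ioc_right (by exact_mod_cast hmn) hu)]
        exact hJmono u (by exact_mod_cast hmn)
      · simp [Set.indicator_of_notMem hu]
    have key := lintegral_iSup (μ := volume) hfm hfmono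
    simp_rw [lintegral_indicator measurableSet_Ioc] at key
    rw [show (⨆ n : ℕ, K ↑n) = ⨆ n : ℕ, ∫⁻ u in Set.Ioc (0:ℝ) n, J n u from rfl, ← key,
      hKinf, ← lintegral_indicator measurableSet_Ioi]
    congr 1
    funext u
    by_cases hu : 0 < u
    · rw [Set.indicator_of_mem (Set.mem_Ioi.mpr hu)]
      refine le_antisymm (iSup_le fun n => le_trans (Set.indicator_le_self _ _ _) (hJle _ _)) ?_
      have h1 : Jinf u = ⨆ n : ℕ, J ↑n u := (sup_lint_Ioc (hqu u)).symm
      rw [h1]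
      refine iSup_le fun n => ?_
      refine le_trans ?_ (le_iSup _ (max n ⌈u⌉₊))
      rw [Set.indicator_of_mem (show u ∈ Set.Ioc (0:ℝ) ((max n ⌈u⌉₊ : ℕ):ℝ) from ⟨hu, le_trans (Nat.le_ceil u) (by exact_mod_cast le_max_right n ⌈u⌉₊)⟩)]
      exact hJmono u (by exact_mod_cast le_max_left n ⌈u⌉₊)
    · rw [Set.indicator_of_notMem (by simpa using hu)]
      simp only [ENNReal.iSup_eq_zero]
      intro n
      exact Set.indicator_of_notMem (fun h => hu h.1) _
  have htend := tendsto_atTop_iSup hKmono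
  have : (⨆ t : ℝ, K t) = Kinf := by
    refine le_antisymm (iSup_le hKle) ?_
    rw [← hsup]
    exact iSup_le fun n => le_iSup K (n : ℝ)
  rwa [this] at htend

lemma Kinf_eval {a σ : ℝ} (hσ : 0 < σ) (ha : σ^2/2 < a) :
    ∫⁻ u in Set.Ioi (0:ℝ), ∫⁻ v in Set.Ioi (0:ℝ),
        ENNReal.ofReal (Real.exp (-a*(u+v) + σ^2 * min u v))
      = ENNReal.ofReal (1 / (a * (a - σ^2/2))) := by
  have ha' : 0 < a := lt_trans (by positivity) ha
  have h2a : 0 < 2*a - σ^2 := by nlinarith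
  -- the indicator-form integrand for the region 0 < v ≤ u
  set f : ℝ → ℝ → ℝ≥0∞ := fun u v =>
    (Set.Ioc (0:ℝ) u).indicator (fun v => ENNReal.ofReal (Real.exp (-a*u) * Real.exp ((σ^2-a)*v))) v
    with hf
  have hfmeas : Measurable (Function.uncurry f) := by
    have hS : MeasurableSet {p : ℝ × ℝ | p.2 ∈ Set.Ioc 0 p.1} := by
      have : {p : ℝ × ℝ | p.2 ∈ Set.Ioc 0 p.1} = {p : ℝ × ℝ | 0 < p.2} ∩ {p : ℝ × ℝ | p.2 ≤ p.1} := by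
        ext p; simp [Set.mem_Ioc, and_comm]
      rw [this]
      exact (measurableSet_lt measurable_const measurable_snd).inter
        (measurableSet_le measurable_snd measurable_fst)
    have : Function.uncurry f = fun p : ℝ × ℝ =>
        Set.indicator {p : ℝ × ℝ | p.2 ∈ Set.Ioc 0 p.1}
          (fun p => ENNReal.ofReal (Real.exp (-a*p.1) * Real.exp ((σ^2-a)*p.2))) p := by
      funext p
      by_cases hp : p.2 ∈ Set.Ioc 0 p.1
      · rw [Function.uncurry]; simp only [hf]
        rw [Set.indicator_of_mem hp,
          Set.indicator_of_mem (show p ∈ {q : ℝ × ℝ | q.2 ∈ Set.Ioc 0 q.1} from hp)]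
      · rw [Function.uncurry]; simp only [hf]
        rw [Set.indicator_of_notMem hp,
          Set.indicator_of_notMem (show p ∉ {q : ℝ × ℝ | q.2 ∈ Set.Ioc 0 q.1} from hp)]
    rw [this]
    exact Measurable.indicator (by fun_prop) hS
  have hint2 : ∀ w : ℝ, ∫⁻ x in Set.Ioi w, ENNReal.ofReal (Real.exp ((σ^2-2*a) * x))
      = ENNReal.ofReal (Real.exp ((σ^2-2*a) * w) / (2*a-σ^2)) := by
    intro w
    have := lint_exp_Ioi h2a w
    simp_rw [show ∀ x : ℝ, -(2*a-σ^2) * x = (σ^2-2*a)*x from fun x => by ring] at this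
    exact this
  -- value of the "B2" integral appearing twice
  have hB2 : ∫⁻ u in Set.Ioi (0:ℝ), ENNReal.ofReal (Real.exp ((σ^2-2*a)*u) / a)
      = ENNReal.ofReal (1 / ((2*a-σ^2) * a)) := by
    have : ∀ u : ℝ, ENNReal.ofReal (Real.exp ((σ^2-2*a)*u) / a)
        = ENNReal.ofReal (Real.exp ((σ^2-2*a)*u)) * ENNReal.ofReal (1/a) := by
      intro u
      rw [← ENNReal.ofReal_mul (Real.exp_pos _).le]
      ring_nf
    simp_rw [this]
    rw [lintegral_mul_const' _ _ ENNReal.ofReal_ne_top, hint2 0]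
    rw [← ENNReal.ofReal_mul (by positivity)]
    congr 1
    rw [mul_zero, Real.exp_zero]
    field_simp
  -- inner integral, for u > 0
  have hinner : ∀ u : ℝ, 0 < u →
      ∫⁻ v in Set.Ioi (0:ℝ), ENNReal.ofReal (Real.exp (-a*(u+v) + σ^2 * min u v))
        = (∫⁻ v, f u v) + ENNReal.ofReal (Real.exp ((σ^2-2*a)*u) / a) := by
    intro u hu
    rw [← Set.Ioc_union_Ioi_eq_Ioi hu.le,
      lintegral_union measurableSet_Ioi Set.Ioc_disjoint_Ioi_same]
    congr 1
    · rw [hf]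
      simp only
      rw [lintegral_indicator measurableSet_Ioc]
      apply setLIntegral_congr_fun measurableSet_Ioc
      intro v hv
      dsimp only
      rw [min_eq_right hv.2, ← Real.exp_add]
      congr 2
      ring
    · have : ∀ v ∈ Set.Ioi u, ENNReal.ofReal (Real.exp (-a*(u+v) + σ^2 * min u v))
          = ENNReal.ofReal (Real.exp ((σ^2-a)*u)) * ENNReal.ofReal (Real.exp (-a*v)) := by
        intro v hv
        rw [min_eq_left (le_of_lt hv), ← ENNReal.ofReal_mul (Real.exp_pos _).le, ← Real.exp_add]
        congr 2
        ring
      rw [setLIntegral_congr_fun measurableSet_Ioi this,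
        lintegral_const_mul' _ _ ENNReal.ofReal_ne_top, lint_exp_Ioi ha' u,
        ← ENNReal.ofReal_mul (Real.exp_pos _).le]
      congr 1
      rw [← mul_div_assoc, ← Real.exp_add]
      congr 2
      ring
  -- swap for the triangle piece
  have hB1 : ∫⁻ u in Set.Ioi (0:ℝ), (∫⁻ v, f u v)
      = ENNReal.ofReal (1 / ((2*a-σ^2) * a)) := by
    rw [lintegral_lintegral_swap hfmeas.aemeasurable]
    have hswap_inner : ∀ v : ℝ, (∫⁻ u in Set.Ioi (0:ℝ), f u v)
        = (Set.Ioi (0:ℝ)).indicator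
            (fun v => ENNReal.ofReal (Real.exp ((σ^2-2*a)*v) / a)) v := by
      intro v
      by_cases hv : 0 < v
      · rw [Set.indicator_of_mem (Set.mem_Ioi.mpr hv)]
        have : ∀ u : ℝ, f u v = (Set.Ici v).indicator
            (fun u => ENNReal.ofReal (Real.exp ((σ^2-a)*v)) * ENNReal.ofReal (Real.exp (-a*u))) u := by
          intro u
          rw [hf]
          simp only
          by_cases hsub : v ≤ u
          · rw [Set.indicator_of_mem (show v ∈ Set.Ioc 0 u from ⟨hv, hsub⟩),
              Set.indicator_of_mem (Set.mem_Ici.mpr hsub),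
              ← ENNReal.ofReal_mul (Real.exp_pos _).le]
            congr 1
            rw [mul_comm]
          · rw [Set.indicator_of_notMem (fun h => hsub h.2),
              Set.indicator_of_notMem (fun h => hsub (Set.mem_Ici.mp h))]
        simp_rw [this]
        have hIci : Set.Ici v ∩ Set.Ioi (0:ℝ) = Set.Ici v :=
          Set.inter_eq_left.mpr (fun x hx => lt_of_lt_of_le hv (Set.mem_Ici.mp hx))
        rw [lintegral_indicator measurableSet_Ici, Measure.restrict_restrict measurableSet_Ici,
          hIci,
          setLIntegral_congr (Filter.EventuallyEq.symm Ioi_ae_eq_Ici),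
          lintegral_const_mul' _ _ ENNReal.ofReal_ne_top, lint_exp_Ioi ha' v,
          ← ENNReal.ofReal_mul (Real.exp_pos _).le]
        congr 1
        rw [div_eq_mul_inv, div_eq_mul_inv, ← mul_assoc, ← Real.exp_add]
        congr 2
        ring
      · rw [Set.indicator_of_notMem (by simpa using hv)]
        have : ∀ u : ℝ, f u v = 0 := by
          intro u
          rw [hf]
          simp only
          exact Set.indicator_of_notMem (fun h => hv h.1) _
        simp_rw [this]
        simp
    simp_rw [hswap_inner]
    rw [lintegral_indicator measurableSet_Ioi]
    exact hB2
  -- put together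
  have houter : ∫⁻ u in Set.Ioi (0:ℝ), ∫⁻ v in Set.Ioi (0:ℝ),
      ENNReal.ofReal (Real.exp (-a*(u+v) + σ^2 * min u v))
      = ∫⁻ u in Set.Ioi (0:ℝ), ((∫⁻ v, f u v) + ENNReal.ofReal (Real.exp ((σ^2-2*a)*u) / a)) := by
    apply lintegral_congr_ae
    exact (MeasureTheory.ae_restrict_iff' measurableSet_Ioi).mpr
      (Filter.Eventually.of_forall fun u hu => hinner u (Set.mem_Ioi.mp hu))
  rw [houter, lintegral_add_left (Measurable.lintegral_prod_right hfmeas), hB1, hB2,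
    ← ENNReal.ofReal_add (div_pos one_pos (by nlinarith : (0:ℝ) < (2*a-σ^2)*a)).le
      (div_pos one_pos (by nlinarith : (0:ℝ) < (2*a-σ^2)*a)).le]
  congr 1
  rw [← add_div]
  rw [div_eq_div_iff (by nlinarith : ((2*a-σ^2)*a : ℝ) ≠ 0) (by nlinarith : (a*(a-σ^2/2) : ℝ) ≠ 0)]
  ring

lemma indep_exp_mul {Ω : Type*} [MeasureSpace Ω] [IsProbabilityMeasure (ℙ : Measure Ω)]
    {X Z : Ω → ℝ} (hX : Measurable X) (hZ : Measurable Z)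
    (hind : IndepFun X Z ℙ) {p q : ℝ≥0}
    (hXlaw : Measure.map X ℙ = gaussianReal 0 p) (hZlaw : Measure.map Z ℙ = gaussianReal 0 q)
    (c d : ℝ) :
    Integrable (fun ω => Real.exp (c * X ω) * Real.exp (d * Z ω)) ℙ ∧
      ∫ ω, Real.exp (c * X ω) * Real.exp (d * Z ω)
        = Real.exp (c ^ 2 * p / 2 + d ^ 2 * q / 2) := by
  have hmc : Measurable fun x : ℝ => Real.exp (c * x) := by fun_prop
  have hmd : Measurable fun x : ℝ => Real.exp (d * x) := by fun_prop
  have hintX : Integrable (fun ω => Real.exp (c * X ω)) ℙ := by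
    have := (integral_exp_gaussianReal c p).1
    rw [← hXlaw] at this
    exact (integrable_map_measure hmc.aestronglyMeasurable hX.aemeasurable).mp this
  have hintZ : Integrable (fun ω => Real.exp (d * Z ω)) ℙ := by
    have := (integral_exp_gaussianReal d q).1
    rw [← hZlaw] at this
    exact (integrable_map_measure hmd.aestronglyMeasurable hZ.aemeasurable).mp this
  have hvalX : ∫ ω, Real.exp (c * X ω) ∂ℙ = Real.exp (c ^ 2 * p / 2) := by
    rw [← integral_map hX.aemeasurable hmc.aestronglyMeasurable, hXlaw]
    exact (integral_exp_gaussianReal c p).2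
  have hvalZ : ∫ ω, Real.exp (d * Z ω) ∂ℙ = Real.exp (d ^ 2 * q / 2) := by
    rw [← integral_map hZ.aemeasurable hmd.aestronglyMeasurable, hZlaw]
    exact (integral_exp_gaussianReal d q).2
  have hindc : IndepFun (fun ω => Real.exp (c * X ω)) (fun ω => Real.exp (d * Z ω)) ℙ :=
    hind.comp hmc hmd
  constructor
  · exact hindc.integrable_mul hintX hintZ
  · have := hindc.integral_mul_eq_mul_integral hintX.aestronglyMeasurable hintZ.aestronglyMeasurable
    rw [show ((fun ω => Real.exp (c * X ω)) * fun ω => Real.exp (d * Z ω))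
      = fun ω => Real.exp (c * X ω) * Real.exp (d * Z ω) from rfl] at this
    rw [this, hvalX, hvalZ, ← Real.exp_add]

lemma swap_lemma {Ω : Type*} [MeasureSpace Ω] [IsProbabilityMeasure (ℙ : Measure Ω)]
    (h : ℝ → Ω → ℝ) (hhjoint : Measurable fun p : Ω × ℝ => h p.2 p.1) (t : ℝ) :
    ∫⁻ ω, (∫⁻ u in Set.Ioc (0:ℝ) t, (∫⁻ v in Set.Ioc (0:ℝ) t,
          ENNReal.ofReal (h u ω * h v ω))) ∂ℙ
        = ∫⁻ u in Set.Ioc (0:ℝ) t, (∫⁻ v in Set.Ioc (0:ℝ) t,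
            (∫⁻ ω, ENNReal.ofReal (h u ω * h v ω) ∂ℙ)) := by
  have hm1 : Measurable fun p : Ω × ℝ =>
      ∫⁻ v in Set.Ioc (0:ℝ) t, ENNReal.ofReal (h p.2 p.1 * h v p.1) := by
    apply Measurable.lintegral_prod_right
      (f := fun (p : Ω × ℝ) (v : ℝ) => ENNReal.ofReal (h p.2 p.1 * h v p.1))
    apply ENNReal.measurable_ofReal.comp
    apply Measurable.mul
    · exact hhjoint.comp measurable_fst
    · exact hhjoint.comp ((measurable_fst.fst).prodMk measurable_snd)
  rw [lintegral_lintegral_swap (μ := ℙ)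
    (ν := volume.restrict (Set.Ioc (0:ℝ) t))
    (f := fun (ω : Ω) (u : ℝ) => ∫⁻ v in Set.Ioc (0:ℝ) t, ENNReal.ofReal (h u ω * h v ω))
    hm1.aemeasurable]
  apply lintegral_congr
  intro u
  have hm2 : Measurable (Function.uncurry
      fun (ω : Ω) (v : ℝ) => ENNReal.ofReal (h u ω * h v ω)) := by
    apply ENNReal.measurable_ofReal.comp
    apply Measurable.mul
    · exact (hhjoint.comp ((measurable_id.prodMk measurable_const))).comp measurable_fst
    · exact hhjoint
  exact lintegral_lintegral_swap
    (f := fun (ω : Ω) (v : ℝ) => ENNReal.ofReal (h u ω * h v ω)) hm2.aemeasurable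

set_option maxHeartbeats 2000000 in
/-- Steady-state second moment of `Y(t) = b ∫₀^t e^{−(a+σ²/2)u} e^{σ W_u} du` when
`a > σ²/2`: `lim_{t→∞} E[Y(t)²] = b²/(a(a − σ²/2))`. -/
theorem second_moment_geometric_noise_solution
    {Ω : Type*} [MeasureSpace Ω] [IsProbabilityMeasure (ℙ : Measure Ω)]
    (W : ℝ → Ω → ℝ) (hW : IsStdBrownianMotion W) (a b σ : ℝ)
    (hb : 0 < b) (hσ : 0 < σ) (ha : σ ^ 2 / 2 < a)
    (Y : ℝ → Ω → ℝ)
    (hY : ∀ t ω, Y t ω =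
      b * ∫ u in (0 : ℝ)..t, Real.exp (-(a + σ ^ 2 / 2) * u) * Real.exp (σ * W u ω)) :
    Tendsto (fun t : ℝ => ∫ ω, (Y t ω) ^ 2) atTop
      (nhds (b ^ 2 / (a * (a - σ ^ 2 / 2)))) := by
  obtain ⟨hWmeas, hW0, hWindep, hWlaw, hWcont⟩ := hW
  have ha' : 0 < a := lt_trans (by positivity) ha
  -- the good set A
  have hN : ℙ {ω | ¬ (W 0 ω = 0 ∧ Continuous fun s => W s ω)} = 0 := by
    have h := hW0.and hWcont
    rwa [MeasureTheory.ae_iff] at h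
  obtain ⟨B, hsubB, hBmeas, hB0⟩ := exists_measurable_superset_of_null hN
  set A : Set Ω := Bᶜ with hA
  have hAmeas : MeasurableSet A := hBmeas.compl
  have hAc : ℙ Aᶜ = 0 := by rw [hA, compl_compl]; exact hB0
  have hA_ae : ∀ᵐ ω, ω ∈ A := by
    rw [MeasureTheory.ae_iff]
    exact hAc
  have hAprop : ∀ ω ∈ A, W 0 ω = 0 ∧ Continuous fun s => W s ω := by
    intro ω hω
    by_contra hcon
    exact hω (hsubB hcon)
  -- the patched process W'
  set W' : ℝ → Ω → ℝ := fun u => A.indicator (W u) with hW'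
  have hW'meas : ∀ u, Measurable (W' u) := fun u => (hWmeas u).indicator hAmeas
  have hW'eqA : ∀ ω ∈ A, ∀ u, W' u ω = W u ω := fun ω hω u => Set.indicator_of_mem hω _
  have hW'notA : ∀ ω ∉ A, ∀ u, W' u ω = 0 := fun ω hω u => Set.indicator_of_notMem hω _
  have hW'cont : ∀ ω, Continuous fun u => W' u ω := by
    intro ω
    by_cases hω : ω ∈ A
    · have e : (fun u => W' u ω) = fun u => W u ω := funext fun u => hW'eqA ω hω u
      rw [e]; exact (hAprop ω hω).2
    · have e : (fun u => W' u ω) = fun _ => 0 := funext fun u => hW'notA ω hω u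
      rw [e]; exact continuous_const
  have hjoint : Measurable fun p : Ω × ℝ => W' p.2 p.1 :=
    (measurable_uncurry_of_continuous_of_measurable hW'cont hW'meas).comp measurable_swap
  -- the integrand h
  set h : ℝ → Ω → ℝ :=
    fun u ω => Real.exp (-(a + σ^2/2) * u) * Real.exp (σ * W' u ω) with hh
  have hhjoint : Measurable fun p : Ω × ℝ => h p.2 p.1 := by
    apply Measurable.mul
    · fun_prop
    · exact Real.measurable_exp.comp (measurable_const.mul hjoint)
  have hhpos : ∀ u ω, 0 < h u ω := fun u ω => mul_pos (Real.exp_pos _) (Real.exp_pos _)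
  have hhcont : ∀ ω, Continuous fun u => h u ω := by
    intro ω
    apply Continuous.mul
    · fun_prop
    · exact Real.continuous_exp.comp (continuous_const.mul (hW'cont ω))
  -- second moments, ordered case
  have hMord : ∀ u v : ℝ, 0 ≤ u → u ≤ v →
      Integrable (fun ω => Real.exp (σ * W' u ω) * Real.exp (σ * W' v ω)) ℙ ∧
      ∫ ω, Real.exp (σ * W' u ω) * Real.exp (σ * W' v ω)
        = Real.exp (σ^2/2*(u+v) + σ^2 * u) := by
    intro u v hu huv
    have hXm : Measurable fun ω => W u ω - W 0 ω := (hWmeas u).sub (hWmeas 0)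
    have hZm : Measurable fun ω => W v ω - W u ω := (hWmeas v).sub (hWmeas u)
    have hXlaw := hWlaw 0 u le_rfl hu
    have hZlaw := hWlaw u v hu huv
    have hind : IndepFun (fun ω => W u ω - W 0 ω) (fun ω => W v ω - W u ω) ℙ := by
      have hmono : Monotone (![0, u, v] : Fin 3 → ℝ) := by
        rw [Fin.monotone_iff_le_succ]
        intro i
        fin_cases i <;> simp [hu, huv]
      have h2 := (hWindep 2 ![0, u, v] hmono).indepFun
        (i := 0) (j := 1) (by decide)
      simpa using h2
    have key := indep_exp_mul hXm hZm hind hXlaw hZlaw (2*σ) σ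
    have hae : (fun ω => Real.exp (σ * W' u ω) * Real.exp (σ * W' v ω))
        =ᵐ[ℙ] fun ω => Real.exp (2*σ * (W u ω - W 0 ω)) * Real.exp (σ * (W v ω - W u ω)) := by
      filter_upwards [hA_ae] with ω hω
      rw [hW'eqA ω hω u, hW'eqA ω hω v, (hAprop ω hω).1,
        ← Real.exp_add, ← Real.exp_add]
      congr 1
      ring
    constructor
    · exact key.1.congr hae.symm
    · rw [integral_congr_ae hae, key.2]
      congr 1
      rw [Real.coe_toNNReal _ (by linarith : (0:ℝ) ≤ u - 0),
        Real.coe_toNNReal _ (by linarith : (0:ℝ) ≤ v - u)]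
      ring
  -- second moments with min
  have hM : ∀ u v : ℝ, 0 ≤ u → 0 ≤ v →
      Integrable (fun ω => Real.exp (σ * W' u ω) * Real.exp (σ * W' v ω)) ℙ ∧
      ∫ ω, Real.exp (σ * W' u ω) * Real.exp (σ * W' v ω)
        = Real.exp (σ^2/2*(u+v) + σ^2 * min u v) := by
    intro u v hu hv
    rcases le_total u v with huv | hvu
    · rw [min_eq_left huv]; exact hMord u v hu huv
    · have h2 := hMord v u hv hvu
      have hcomm : (fun ω => Real.exp (σ * W' v ω) * Real.exp (σ * W' u ω))
          = fun ω => Real.exp (σ * W' u ω) * Real.exp (σ * W' v ω) :=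
        funext fun ω => mul_comm _ _
      rw [hcomm] at h2
      rw [min_eq_right hvu]
      refine ⟨h2.1, ?_⟩
      rw [h2.2]
      congr 1
      ring
  -- the kernel q
  set q : ℝ → ℝ → ℝ≥0∞ :=
    fun u v => ENNReal.ofReal (Real.exp (-a*(u+v) + σ^2 * min u v)) with hq
  have hqmeas : Measurable (Function.uncurry q) := by
    have hcont : Continuous fun p : ℝ × ℝ =>
        Real.exp (-a*(p.1+p.2) + σ^2 * min p.1 p.2) := by
      apply Real.continuous_exp.comp
      apply Continuous.add
      · fun_prop
      · exact continuous_const.mul (continuous_fst.min continuous_snd)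
    exact (ENNReal.continuous_ofReal.comp hcont).measurable
  have hPq : ∀ u v : ℝ, 0 ≤ u → 0 ≤ v →
      ∫⁻ ω, ENNReal.ofReal (h u ω * h v ω) ∂ℙ = q u v := by
    intro u v hu hv
    have hre : (fun ω => h u ω * h v ω) = fun ω =>
        (Real.exp (-(a + σ^2/2) * u) * Real.exp (-(a + σ^2/2) * v)) *
          (Real.exp (σ * W' u ω) * Real.exp (σ * W' v ω)) := by
      funext ω; rw [hh]; ring
    have hint : Integrable (fun ω => h u ω * h v ω) ℙ := by
      rw [hre]; exact ((hM u v hu hv).1.const_mul _)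
    rw [← ofReal_integral_eq_lintegral_ofReal hint
      (Filter.Eventually.of_forall fun ω => (mul_pos (hhpos u ω) (hhpos v ω)).le)]
    rw [hq]
    congr 1
    rw [hre, integral_const_mul, (hM u v hu hv).2,
      ← Real.exp_add, ← Real.exp_add]
    congr 1
    ring
  -- main identity for fixed nonnegative time
  have key : ∀ t : ℝ, 0 ≤ t → ∫ ω, (Y t ω)^2
      = b^2 * (∫⁻ u in Set.Ioc (0:ℝ) t, ∫⁻ v in Set.Ioc (0:ℝ) t, q u v).toReal := by
    intro t ht
    have hIsm : StronglyMeasurable fun ω => ∫ u in Set.Ioc (0:ℝ) t, h u ω :=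
      MeasureTheory.StronglyMeasurable.integral_prod_right'
        (f := fun p : Ω × ℝ => h p.2 p.1) hhjoint.stronglyMeasurable
    have hInn : ∀ ω, 0 ≤ ∫ u in Set.Ioc (0:ℝ) t, h u ω :=
      fun ω => integral_nonneg fun u => (hhpos u ω).le
    have hIint : ∀ ω, IntegrableOn (fun u => h u ω) (Set.Ioc (0:ℝ) t) :=
      fun ω => (hhcont ω).integrableOn_Ioc
    have step1 : (fun ω => (Y t ω)^2)
        =ᵐ[ℙ] fun ω => b^2 * (∫ u in Set.Ioc (0:ℝ) t, h u ω)^2 := by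
      filter_upwards [hA_ae] with ω hω
      rw [hY t ω]
      have e : (fun u => Real.exp (-(a + σ^2/2) * u) * Real.exp (σ * W u ω))
          = fun u => h u ω := by
        funext u
        rw [hh]
        simp only
        rw [hW'eqA ω hω u]
      have e2 : -(a + σ ^ 2 / 2) = -(a + σ^2/2) := rfl
      rw [e2, e, intervalIntegral.integral_of_le ht]
      ring
    have step2 : ∫ ω, (Y t ω)^2 = b^2 * ∫ ω, (∫ u in Set.Ioc (0:ℝ) t, h u ω)^2 := by
      rw [integral_congr_ae step1, integral_const_mul]
    have step3 : ∫ ω, (∫ u in Set.Ioc (0:ℝ) t, h u ω)^2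
        = (∫⁻ ω, ENNReal.ofReal ((∫ u in Set.Ioc (0:ℝ) t, h u ω)^2)).toReal :=
      integral_eq_lintegral_of_nonneg_ae
        (Filter.Eventually.of_forall fun ω => sq_nonneg _)
        (hIsm.measurable.pow_const 2).aestronglyMeasurable
    have step4 : ∀ ω, ENNReal.ofReal ((∫ u in Set.Ioc (0:ℝ) t, h u ω)^2)
        = ∫⁻ u in Set.Ioc (0:ℝ) t, (∫⁻ v in Set.Ioc (0:ℝ) t,
            ENNReal.ofReal (h u ω * h v ω)) := by
      intro ω
      have e1 : (∫ u in Set.Ioc (0:ℝ) t, h u ω)^2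
          = ∫ u in Set.Ioc (0:ℝ) t, (h u ω * ∫ x in Set.Ioc (0:ℝ) t, h x ω) := by
        rw [integral_mul_const, sq]
      rw [e1, ofReal_integral_eq_lintegral_ofReal
        ((hIint ω).mul_const _)
        (Filter.Eventually.of_forall fun u => mul_nonneg (hhpos u ω).le (hInn ω))]
      apply lintegral_congr
      intro u
      have e2 : ∫ v in Set.Ioc (0:ℝ) t, (h u ω * h v ω) = h u ω * ∫ x in Set.Ioc (0:ℝ) t, h x ω := by
        rw [integral_const_mul]
      rw [← e2, ofReal_integral_eq_lintegral_ofReal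
        ((hIint ω).const_mul _)
        (Filter.Eventually.of_forall fun v => mul_nonneg (hhpos u ω).le (hhpos v ω).le)]
    have step5 := swap_lemma h hhjoint t
    have step6 : ∫⁻ u in Set.Ioc (0:ℝ) t, (∫⁻ v in Set.Ioc (0:ℝ) t,
          (∫⁻ ω, ENNReal.ofReal (h u ω * h v ω) ∂ℙ))
        = ∫⁻ u in Set.Ioc (0:ℝ) t, (∫⁻ v in Set.Ioc (0:ℝ) t, q u v) := by
      apply lintegral_congr_ae
      refine (ae_restrict_iff' measurableSet_Ioc).mpr
        (Filter.Eventually.of_forall fun u hu => ?_)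
      apply lintegral_congr_ae
      refine (ae_restrict_iff' measurableSet_Ioc).mpr
        (Filter.Eventually.of_forall fun v hv => ?_)
      exact hPq u v hu.1.le hv.1.le
    rw [step2, step3, lintegral_congr step4, step5, step6]
  -- pass to the limit
  have hKtend := tendsto_double_lint hqmeas
  have hKval : (∫⁻ u in Set.Ioi (0:ℝ), ∫⁻ v in Set.Ioi (0:ℝ), q u v)
      = ENNReal.ofReal (1 / (a * (a - σ^2/2))) := by
    simp only [hq]
    exact Kinf_eval hσ ha
  have hLpos : 0 < 1 / (a * (a - σ^2/2)) := by
    apply div_pos one_pos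
    nlinarith
  have h1 : Tendsto (fun t : ℝ =>
      (∫⁻ u in Set.Ioc (0:ℝ) t, ∫⁻ v in Set.Ioc (0:ℝ) t, q u v).toReal) atTop
      (nhds ((ENNReal.ofReal (1 / (a * (a - σ^2/2)))).toReal)) := by
    apply (ENNReal.tendsto_toReal ENNReal.ofReal_ne_top).comp
    rw [← hKval]
    exact hKtend
  rw [ENNReal.toReal_ofReal hLpos.le] at h1
  have h2 := h1.const_mul (b^2)
  have h3 : b^2 * (1 / (a * (a - σ^2/2))) = b ^ 2 / (a * (a - σ ^ 2 / 2)) := by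
    ring
  rw [h3] at h2
  refine Tendsto.congr' ?_ h2
  filter_upwards [eventually_ge_atTop (0:ℝ)] with t ht
  exact (key t ht).symm
end
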